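/- Let p ≥ 1 and let H be a connected graph with exactly 2p vertices. Then for any r ≥ ⌈log₂ p⌉, the matching width of T_r(H) is at least (r + 1 - ⌈log₂ p⌉)·p/2, where T_r is the complete binary tree of height r. -/

import Mathlib

open SimpleGraph

/-- There is a matching of size `t` in `G` all of whose edges have one end in `A` and the
other end outside `A`. -/
def HasCutMatching {V : Type} (G : SimpleGraph V) (A : Set V) (t : ℕ) : Prop :=
  ∃ a b : Fin t → V, Function.Injective a ∧ Function.Injective b ∧
    ∀ i, a i ∈ A ∧ b i ∉ A ∧ G.Adj (a i) (b i)

/-- The matching width of `G`: the minimum over all permutations (orderings) of `V(G)` of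
the maximum, over all prefixes, of the size of a largest matching consisting of edges
between the prefix and the rest of the vertices. -/
noncomputable def matchingWidth {V : Type} [Fintype V] (G : SimpleGraph V) : ℕ :=
  ⨅ σ : Fin (Fintype.card V) ≃ V, ⨆ i : Fin (Fintype.card V + 1),
    sSup {t | HasCutMatching G {v | ((σ.symm v : Fin (Fintype.card V)) : ℕ) < (i : ℕ)} t}

/-- The complete binary tree of height `r`, with `2^(r+1) - 1` vertices in heap
numbering: vertex `i` is adjacent to its children `2i+1` and `2i+2`. -/
def completeBinaryTree (r : ℕ) : SimpleGraph (Fin (2 ^ (r + 1) - 1)) :=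
  SimpleGraph.fromRel (fun i j => (j : ℕ) = 2 * (i : ℕ) + 1 ∨ (j : ℕ) = 2 * (i : ℕ) + 2)


namespace MWLB

lemma tsub_telescope (f : ℕ → ℕ) (m : ℕ) :
    f 0 - f m ≤ ∑ j ∈ Finset.range m, (f j - f (j+1)) := by
  induction m with
  | zero => simp
  | succ m ih => rw [Finset.sum_range_succ]; omega

lemma geom_two (n : ℕ) : ∑ j ∈ Finset.range n, 2^j = 2^n - 1 := by
  induction n with
  | zero => simp
  | succ n ih =>
    rw [Finset.sum_range_succ, ih]
    have : 1 ≤ 2^n := Nat.one_le_two_pow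
    rw [pow_succ]; omega

lemma walk_boundary {V : Type} {G : SimpleGraph V} {S : Set V} {x y : V}
    (w : G.Walk x y) : x ∈ S → y ∉ S → ∃ u v, u ∈ S ∧ v ∉ S ∧ G.Adj u v := by
  induction w with
  | nil => intro hx hy; exact absurd hx hy
  | @cons a b c h w ih =>
    intro hx hy
    by_cases hb : b ∈ S
    · exact ih hb hy
    · exact ⟨a, b, hx, hb, h⟩

lemma exists_boundary_edge {V : Type} {G : SimpleGraph V} (hc : G.Preconnected)
    {S : Set V} {x y : V} (hx : x ∈ S) (hy : y ∉ S) :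
    ∃ u v, u ∈ S ∧ v ∉ S ∧ G.Adj u v := by
  obtain ⟨w⟩ := hc x y
  exact walk_boundary w hx hy

/-- a good set of cut pairs -/
def Good {V : Type} (G : SimpleGraph V) (A : Set V) (P : Finset (V × V)) : Prop :=
  (∀ e ∈ P, e.1 ∈ A ∧ e.2 ∉ A ∧ G.Adj e.1 e.2) ∧
  (Set.InjOn (Prod.fst : V × V → V) ↑P) ∧ (Set.InjOn (Prod.snd : V × V → V) ↑P)

lemma Good.hasCutMatching {V : Type} {G : SimpleGraph V} {A : Set V} {P : Finset (V × V)}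
    (h : Good G A P) : HasCutMatching G A P.card := by
  obtain ⟨h1, h2, h3⟩ := h
  let e := P.equivFin.symm
  refine ⟨fun i => ((e i : V × V)).1, fun i => ((e i : V × V)).2, ?_, ?_, ?_⟩
  · intro i j hij
    have := h2 (Finset.mem_coe.2 (e i).2) (Finset.mem_coe.2 (e j).2) hij
    exact e.injective (Subtype.ext this)
  · intro i j hij
    have := h3 (Finset.mem_coe.2 (e i).2) (Finset.mem_coe.2 (e j).2) hij
    exact e.injective (Subtype.ext this)
  · intro i; exact h1 _ (e i).2

lemma hasCutMatching_mono {V : Type} {G : SimpleGraph V} {A : Set V} {s t : ℕ}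
    (hst : s ≤ t) (h : HasCutMatching G A t) : HasCutMatching G A s := by
  obtain ⟨a, b, ha, hb, hab⟩ := h
  exact ⟨a ∘ Fin.castLE hst, b ∘ Fin.castLE hst,
    ha.comp (Fin.castLE_injective hst), hb.comp (Fin.castLE_injective hst),
    fun i => hab _⟩

lemma le_matchingWidth {V : Type} [Fintype V] (G : SimpleGraph V) (t0 : ℕ)
    (h : ∀ σ : Fin (Fintype.card V) ≃ V, ∃ i : Fin (Fintype.card V + 1),
      HasCutMatching G {v | ((σ.symm v : Fin (Fintype.card V)) : ℕ) < (i : ℕ)} t0) :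
    t0 ≤ matchingWidth G := by
  have hbdd : ∀ (A : Set V) t, HasCutMatching G A t → t ≤ Fintype.card V := by
    rintro A t ⟨a, b, ha, hb, hab⟩
    simpa using Fintype.card_le_of_injective a ha
  have hne : Nonempty (Fin (Fintype.card V) ≃ V) := ⟨(Fintype.equivFin V).symm⟩
  have h0 : ∀ (A : Set V), HasCutMatching G A 0 := by
    intro A
    refine ⟨Fin.elim0, Fin.elim0, ?_, ?_, ?_⟩ <;> intro a <;> exact a.elim0
  rw [matchingWidth]
  refine le_ciInf fun σ => ?_
  obtain ⟨i, hi⟩ := h σ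
  refine le_trans (le_csSup ⟨Fintype.card V, fun t ht => hbdd _ _ ht⟩ hi) ?_
  refine le_ciSup_of_le ⟨Fintype.card V, ?_⟩ i le_rfl
  rintro x ⟨j, rfl⟩
  exact csSup_le ⟨0, h0 _⟩ fun t ht => hbdd _ _ ht

end MWLB


namespace MWLB

/-- heap parent -/
def pa (n : ℕ) : ℕ := (n - 1) / 2

lemma pa_lt {n : ℕ} (h : 1 ≤ n) : pa n < n := by unfold pa; omega

lemma pa_le (n : ℕ) : pa n ≤ n := by unfold pa; omega

lemma pa_iter_le (k n : ℕ) : pa^[k] n ≤ n := by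
  induction k with
  | zero => simp
  | succ k ih =>
    rw [Function.iterate_succ_apply']
    exact le_trans (pa_le _) ih

lemma pa_zero : pa 0 = 0 := rfl

lemma pa_iter_zero (k : ℕ) : pa^[k] 0 = 0 := by
  induction k with
  | zero => rfl
  | succ k ih => rw [Function.iterate_succ_apply, pa_zero, ih]

lemma child_rel {j : ℕ} (h : 1 ≤ j) : j = 2 * pa j + 1 ∨ j = 2 * pa j + 2 := by
  unfold pa; omega

def isAnc (t j : ℕ) : Prop := ∃ k, pa^[k] j = t

lemma isAnc_refl (t : ℕ) : isAnc t t := ⟨0, rfl⟩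

lemma isAnc_trans {a b c : ℕ} (h1 : isAnc a b) (h2 : isAnc b c) : isAnc a c := by
  obtain ⟨k, hk⟩ := h1; obtain ⟨l, hl⟩ := h2
  exact ⟨k + l, by rw [Function.iterate_add_apply, hl, hk]⟩

lemma anc_chain {j t t' k k'} (h : pa^[k] j = t) (h' : pa^[k'] j = t') (hkk : k ≤ k') :
    pa^[k' - k] t = t' := by
  rw [← h, ← Function.iterate_add_apply]
  rwa [Nat.sub_add_cancel hkk]

/-- descendants at distance k below t form an interval -/
lemma desc_range (k : ℕ) : ∀ t j : ℕ, 2^k * (t+1) - 1 ≤ j → j ≤ 2^k * (t+1) + 2^k - 2 →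
    pa^[k] j = t := by
  induction k with
  | zero => intro t j h1 h2; simp at h1 h2 ⊢; omega
  | succ k ih =>
    intro t j h1 h2
    have hk : 1 ≤ 2^k := Nat.one_le_two_pow
    have e1 : (2:ℕ)^(k+1) * (t+1) = 2 * (2^k * (t+1)) := by ring
    have e2 : (2:ℕ)^(k+1) = 2 * 2^k := by ring
    rw [e1] at h1 h2
    rw [e2] at h2
    have hda : 2^k ≤ 2^k * (t+1) := by
      have := Nat.mul_le_mul_left (2^k) (show 1 ≤ t+1 by omega)
      simpa using this
    rw [Function.iterate_succ_apply]
    refine ih t (pa j) ?_ ?_ <;> unfold pa <;> omega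

/-- grandchild facts -/
lemma grandchild_anc {t g : ℕ} (h1 : 4*t+3 ≤ g) (h2 : g ≤ 4*t+5) : isAnc t g := by
  refine ⟨2, ?_⟩
  show pa (pa g) = t
  unfold pa; omega

lemma grandchild_not_anc {t g g' : ℕ} (h1 : 4*t+3 ≤ g) (h2 : g ≤ 4*t+5)
    (h1' : 4*t+3 ≤ g') (h2' : g' ≤ 4*t+5) (hne : g ≠ g') {m : ℕ} (hm : pa^[m] g = g') :
    False := by
  rcases Nat.eq_zero_or_pos m with rfl | hm0
  · exact hne hm
  · have h3 : pa g ≤ 2*t+2 := by unfold pa; omega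
    have : pa^[m] g ≤ pa g := by
      obtain ⟨m', rfl⟩ := Nat.exists_eq_add_of_le hm0
      rw [add_comm, Function.iterate_add_apply]
      exact pa_iter_le _ _
    omega

lemma grandchild_disj {t g g' j : ℕ} (h1 : 4*t+3 ≤ g) (h2 : g ≤ 4*t+5)
    (h1' : 4*t+3 ≤ g') (h2' : g' ≤ 4*t+5) (hne : g ≠ g')
    (hj : isAnc g j) (hj' : isAnc g' j) : False := by
  obtain ⟨k, hk⟩ := hj; obtain ⟨k', hk'⟩ := hj'
  rcases le_total k k' with h | h
  · exact grandchild_not_anc h1 h2 h1' h2' hne (anc_chain hk hk' h)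
  · exact grandchild_not_anc h1' h2' h1 h2 (Ne.symm hne) (anc_chain hk' hk h)

end MWLB

namespace MWLB

lemma chain_pos {x t kx : ℕ} (hkx : pa^[kx] x = t) (hmin : ∀ k, k < kx → pa^[k] x ≠ t)
    {i : ℕ} (hi : i < kx) : 1 ≤ pa^[i] x := by
  by_contra h
  have h0 : pa^[i] x = 0 := by omega
  have h2 : pa^[kx] x = 0 := by
    have h3 : pa^[kx] x = pa^[kx - i] (pa^[i] x) := by
      rw [← Function.iterate_add_apply]; congr 1; omega
    rw [h3, h0, pa_iter_zero]
  have ht : t = 0 := by rw [← hkx, h2]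
  exact hmin i hi (by rw [h0, ht])

lemma chain_strict {x t kx : ℕ} (hkx : pa^[kx] x = t) (hmin : ∀ k, k < kx → pa^[k] x ≠ t) :
    ∀ i' i, i < i' → i' ≤ kx → pa^[i'] x < pa^[i] x := by
  intro i'
  induction i' with
  | zero => omega
  | succ n ih =>
    intro i hi hn
    have hstep : pa^[n+1] x < pa^[n] x := by
      rw [Function.iterate_succ_apply']
      exact pa_lt (chain_pos hkx hmin (by omega))
    rcases Nat.lt_or_ge i n with h | h
    · exact lt_trans hstep (ih i h (by omega))
    · have hin : i = n := by omega
      subst hin; exact hstep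

lemma path_exists {t u x y : ℕ}
    (hx : isAnc t x) (hy : isAnc t y) (hxu : ¬ isAnc u x) (hyu : ¬ isAnc u y) :
    ∃ (m : ℕ) (z : ℕ → ℕ),
      z 0 = x ∧ z m = y ∧
      (∀ j, j ≤ m → z j ≤ max x y ∧ isAnc t (z j) ∧ ¬ isAnc u (z j)) ∧
      (∀ j, j < m → z (j+1) = 2 * z j + 1 ∨ z (j+1) = 2 * z j + 2 ∨
                    z j = 2 * z (j+1) + 1 ∨ z j = 2 * z (j+1) + 2) ∧
      (∀ j j', j ≤ m → j' ≤ m → z j = z j' → j = j') := by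
  classical
  set kx := Nat.find hx with hkxdef
  have hkx : pa^[kx] x = t := Nat.find_spec hx
  have hkxmin : ∀ k, k < kx → pa^[k] x ≠ t := fun k hk => Nat.find_min hx hk
  set ky := Nat.find hy with hkydef
  have hky : pa^[ky] y = t := Nat.find_spec hy
  have hkymin : ∀ k, k < ky → pa^[k] y ≠ t := fun k hk => Nat.find_min hy hk
  have hm : ∃ mm, ∃ n, n ≤ ky ∧ pa^[mm] x = pa^[n] y := ⟨kx, ky, le_rfl, by rw [hkx, hky]⟩
  set ms := Nat.find hm with hmsdef
  obtain ⟨n₀, hn₀ky, hn₀⟩ := Nat.find_spec hm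
  have hmsmin : ∀ k, k < ms → ¬ ∃ n, n ≤ ky ∧ pa^[k] x = pa^[n] y :=
    fun k hk => Nat.find_min hm hk
  have hmskx : ms ≤ kx := Nat.find_le ⟨ky, le_rfl, by rw [hkx, hky]⟩
  have hn : ∃ n, pa^[n] y = pa^[ms] x := ⟨n₀, hn₀.symm⟩
  set ns := Nat.find hn with hnsdef
  have hL : pa^[ns] y = pa^[ms] x := Nat.find_spec hn
  have hnsmin : ∀ k, k < ns → pa^[k] y ≠ pa^[ms] x := fun k hk => Nat.find_min hn hk
  have hnsky : ns ≤ ky := le_trans (Nat.find_le hn₀.symm) hn₀ky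
  refine ⟨ms + ns, fun j => if j ≤ ms then pa^[j] x else pa^[ms + ns - j] y, ?_, ?_, ?_, ?_, ?_⟩
  · simp
  · by_cases h : ms + ns ≤ ms
    case neg =>
      simp only [if_neg h]
      rw [show ms + ns - (ms + ns) = 0 by omega]
      simp
    case pos =>
      have hns0 : ns = 0 := by omega
      simp only [if_pos h]
      have h5 : pa^[0] y = pa^[ms] x := by rw [← hns0]; exact hL
      simp at h5
      rw [show ms + ns = ms by omega, ← h5]
  · intro j hj
    by_cases h : j ≤ ms
    · simp only [if_pos h]
      refine ⟨le_trans (pa_iter_le _ _) (le_max_left _ _), ⟨kx - j, ?_⟩, ?_⟩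
      · rw [← Function.iterate_add_apply, show kx - j + j = kx by omega, hkx]
      · rintro ⟨l, hl⟩
        rw [← Function.iterate_add_apply] at hl
        exact hxu ⟨l + j, hl⟩
    · simp only [if_neg h]
      refine ⟨le_trans (pa_iter_le _ _) (le_max_right _ _), ⟨ky - (ms + ns - j), ?_⟩, ?_⟩
      · rw [← Function.iterate_add_apply, show ky - (ms + ns - j) + (ms + ns - j) = ky by omega,
          hky]
      · rintro ⟨l, hl⟩
        rw [← Function.iterate_add_apply] at hl
        exact hyu ⟨l + (ms + ns - j), hl⟩
  · intro j hj
    by_cases h : j + 1 ≤ ms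
    · have hjm : j ≤ ms := by omega
      simp only [if_pos h, if_pos hjm]
      have hpos : 1 ≤ pa^[j] x := chain_pos hkx hkxmin (by omega)
      have hstep : pa^[j+1] x = pa (pa^[j] x) := Function.iterate_succ_apply' _ _ _
      rcases child_rel hpos with hc | hc
      · right; right; left; rw [hstep, ← hc]  -- z j = 2 * z (j+1) + 1
      · right; right; right; rw [hstep, ← hc]
    · -- j ≥ ms
      have hj1 : ¬ (j + 1 ≤ ms) := h
      have hns1 : 1 ≤ ns := by omega
      have hidx : ms + ns - (j+1) < ky := by omega
      have hzj1 : pa^[ms + ns - (j+1)] y = pa^[ms + ns - (j+1)] y := rfl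
      have hpos : 1 ≤ pa^[ms + ns - (j+1)] y := chain_pos hky hkymin hidx
      have hparent : (if j ≤ ms then pa^[j] x else pa^[ms + ns - j] y)
          = pa (pa^[ms + ns - (j+1)] y) := by
        by_cases hjms : j ≤ ms
        · have hjeq : j = ms := by omega
          simp only [if_pos hjms]
          have e := Function.iterate_succ_apply' pa (ms + ns - (ms+1)) y
          rw [hjeq, ← hL, ← e]
          congr 1
          omega
        · simp only [if_neg hjms]
          have e := Function.iterate_succ_apply' pa (ms + ns - (j+1)) y
          rw [← e]
          congr 1
          omega
      simp only [if_neg hj1]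
      rcases child_rel hpos with hc | hc
      · left; rw [hparent, ← hc]
      · right; left; rw [hparent, ← hc]
  · -- injectivity
    have aux : ∀ j j', j < j' → j' ≤ ms + ns →
        (if j ≤ ms then pa^[j] x else pa^[ms + ns - j] y) ≠
        (if j' ≤ ms then pa^[j'] x else pa^[ms + ns - j'] y) := by
      intro j j' hjj hj'
      by_cases h2 : j' ≤ ms
      · have h1 : j ≤ ms := by omega
        simp only [if_pos h1, if_pos h2]
        have := chain_strict hkx hkxmin j' j hjj (by omega)
        omega
      · by_cases h1 : j ≤ ms
        · simp only [if_pos h1, if_neg h2]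
          intro heq
          have hidx : ms + ns - j' < ns := by omega
          rcases Nat.lt_or_ge j ms with hlt | hge
          · exact hmsmin j hlt ⟨ms + ns - j', by omega, by rw [heq]⟩
          · have hjeq : j = ms := by omega
            subst hjeq
            exact hnsmin (ms + ns - j') hidx (by rw [← heq])
        · simp only [if_neg h1, if_neg h2]
          have := chain_strict hky hkymin (ms + ns - j) (ms + ns - j') (by omega) (by omega)
          omega
    intro j j' hj hj' heq
    rcases Nat.lt_trichotomy j j' with h | h | h
    · exact absurd heq (aux j j' h hj')
    · exact h
    · exact absurd heq.symm (aux j' j h hj)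

end MWLB

namespace MWLB

open Finset SimpleGraph

section Main

variable {VH : Type} [Fintype VH] {H : SimpleGraph VH} {r : ℕ}

open Classical in
/-- subtree node set -/
noncomputable def D (r t : ℕ) : Finset (Fin (2^(r+1) - 1)) :=
  Finset.univ.filter (fun j => isAnc t j.val)

lemma mem_D {r t : ℕ} {j : Fin (2^(r+1)-1)} : j ∈ D r t ↔ isAnc t j.val := by
  classical
  rw [D]
  simp only [Finset.mem_filter, Finset.mem_univ, true_and]

lemma D_subset {t u : ℕ} (h : isAnc t u) : D r u ⊆ D r t := by
  intro j hj
  rw [mem_D] at *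
  exact isAnc_trans h hj

variable (σ : Fin (Fintype.card (Fin (2^(r+1) - 1) × VH)) ≃ (Fin (2^(r+1) - 1) × VH))

/-- prefix set -/
def Aset (i : ℕ) : Set (Fin (2^(r+1) - 1) × VH) := {v | ((σ.symm v : Fin _) : ℕ) < i}

/-- number of prefix vertices in W -/
def cnt (W : Finset (Fin (2^(r+1) - 1) × VH)) (i : ℕ) : ℕ :=
  (W.filter (fun v => ((σ.symm v : Fin _) : ℕ) < i)).card

/-- prefix slice of a copy -/
def SA (t : Fin (2^(r+1) - 1)) (i : ℕ) : Finset VH :=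
  Finset.univ.filter (fun v => ((σ.symm (t, v) : Fin _) : ℕ) < i)

lemma SA_mem {t : Fin (2^(r+1) - 1)} {i : ℕ} {v : VH} :
    v ∈ SA σ t i ↔ (t, v) ∈ Aset σ i := by
  simp [SA, Aset]

lemma cnt_mono (W) {i i' : ℕ} (h : i ≤ i') : cnt σ W i ≤ cnt σ W i' := by
  apply Finset.card_le_card
  intro v hv
  simp only [Finset.mem_filter] at *
  exact ⟨hv.1, lt_of_lt_of_le hv.2 h⟩

lemma cnt_zero (W) : cnt σ W 0 = 0 := by simp [cnt]

lemma cnt_total (W) {i : ℕ} (h : Fintype.card (Fin (2^(r+1) - 1) × VH) ≤ i) :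
    cnt σ W i = W.card := by
  unfold cnt
  rw [Finset.filter_true_of_mem]
  intro v _
  exact lt_of_lt_of_le (σ.symm v).isLt h

lemma cnt_le (W i) : cnt σ W i ≤ W.card := Finset.card_le_card (Finset.filter_subset _ _)

lemma cnt_step (W i) : cnt σ W (i+1) ≤ cnt σ W i + 1 := by
  classical
  by_cases h : i < Fintype.card (Fin (2^(r+1) - 1) × VH)
  · have hsub : W.filter (fun v => ((σ.symm v : Fin _) : ℕ) < i + 1) ⊆
        insert (σ ⟨i, h⟩) (W.filter (fun v => ((σ.symm v : Fin _) : ℕ) < i)) := by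
      intro v hv
      rw [Finset.mem_filter] at hv
      rcases Nat.lt_or_ge ((σ.symm v : Fin _) : ℕ) i with h1 | h1
      · exact Finset.mem_insert_of_mem (Finset.mem_filter.2 ⟨hv.1, h1⟩)
      · have h2 : ((σ.symm v : Fin _) : ℕ) = i := by omega
        have h3 : v = σ ⟨i, h⟩ := by
          have h6 := σ.apply_symm_apply v
          rw [← h6]
          congr 1
          exact Fin.ext h2
        rw [h3]
        exact Finset.mem_insert_self _ _
    exact le_trans (Finset.card_le_card hsub) (Finset.card_insert_le _ _)
  · have he : cnt σ W (i+1) = cnt σ W i := by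
      unfold cnt
      congr 1
      apply Finset.filter_congr
      intro v _
      have h4 := (σ.symm v).isLt
      constructor <;> intro h5 <;> omega
    omega

lemma cnt_subset {W W'} (h : W' ⊆ W) (i) : cnt σ W' i ≤ cnt σ W i := by
  apply Finset.card_le_card
  intro v hv
  simp only [Finset.mem_filter] at *
  exact ⟨h hv.1, hv.2⟩

lemma cnt_subset_diff {W W'} (h : W' ⊆ W) (i) :
    cnt σ W i ≤ cnt σ W' i + (W.card - W'.card) := by
  classical
  have hsub : W.filter (fun v => ((σ.symm v : Fin _) : ℕ) < i) ⊆
      (W'.filter (fun v => ((σ.symm v : Fin _) : ℕ) < i)) ∪ (W \ W') := by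
    intro v hv
    rw [Finset.mem_filter] at hv
    by_cases hv' : v ∈ W'
    · exact Finset.mem_union_left _ (Finset.mem_filter.2 ⟨hv', hv.2⟩)
    · exact Finset.mem_union_right _ (Finset.mem_sdiff.2 ⟨hv.1, hv'⟩)
  calc cnt σ W i ≤ _ := Finset.card_le_card hsub
    _ ≤ _ + (W \ W').card := Finset.card_union_le _ _
    _ = _ := by rw [Finset.card_sdiff_of_subset h]; rfl

lemma cnt_hit {W} {q : ℕ} (hq : 1 ≤ q) (hW : q ≤ W.card) :
    ∃ i, i ≤ Fintype.card (Fin (2^(r+1) - 1) × VH) ∧ cnt σ W i = q := by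
  have hex : ∃ i, q ≤ cnt σ W i :=
    ⟨Fintype.card (Fin (2^(r+1) - 1) × VH), by rw [cnt_total σ W le_rfl]; exact hW⟩
  refine ⟨Nat.find hex, Nat.find_le (by rw [cnt_total σ W le_rfl]; exact hW), ?_⟩
  have hspec := Nat.find_spec hex
  have hne : Nat.find hex ≠ 0 := by
    intro h0
    rw [h0, cnt_zero] at hspec
    omega
  have hmin : ¬ q ≤ cnt σ W (Nat.find hex - 1) := Nat.find_min hex (by omega)
  have hstep := cnt_step σ W (Nat.find hex - 1)
  rw [show Nat.find hex - 1 + 1 = Nat.find hex by omega] at hstep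
  omega

lemma cnt_prod (R : Finset (Fin (2^(r+1) - 1))) (i : ℕ) :
    cnt σ (R ×ˢ Finset.univ) i = ∑ t ∈ R, (SA σ t i).card := by
  classical
  unfold cnt
  rw [Finset.card_eq_sum_card_fiberwise (f := Prod.fst) (t := R)
    (fun x hx => (Finset.mem_product.1 (Finset.mem_filter.1 hx).1).1)]
  refine Finset.sum_congr rfl fun t ht => ?_
  have he : ((R ×ˢ Finset.univ).filter (fun v => ((σ.symm v : Fin _) : ℕ) < i)).filter
      (fun x => x.1 = t) = (SA σ t i).image (fun v => (t, v)) := by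
    ext x
    simp only [Finset.mem_filter, Finset.mem_product, Finset.mem_image, SA,
      Finset.mem_univ, true_and]
    constructor
    · rintro ⟨⟨⟨hR, -⟩, hlt⟩, h1⟩
      refine ⟨x.2, ?_, ?_⟩
      · rw [show (t, x.2) = x from by rw [← h1]]
        exact hlt
      · rw [← h1]
    · rintro ⟨v, hv, rfl⟩
      exact ⟨⟨⟨ht, trivial⟩, hv⟩, rfl⟩
  rw [he, Finset.card_image_of_injective _ (fun a b h => by simpa using h)]

lemma verts_card (R : Finset (Fin (2^(r+1) - 1))) :
    (R ×ˢ (Finset.univ : Finset VH)).card = R.card * Fintype.card VH := by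
  rw [Finset.card_product, Finset.card_univ]

end Main

end MWLB

namespace MWLB

open Finset SimpleGraph

section Chunk

variable {VH : Type} [Fintype VH] {H : SimpleGraph VH} {r : ℕ}
variable (σ : Fin (Fintype.card (Fin (2^(r+1) - 1) × VH)) ≃ (Fin (2^(r+1) - 1) × VH))

lemma chunk (hH : H.Connected) {p : ℕ} (hp : 1 ≤ p) (hcard : Fintype.card VH = 2*p)
    (i : ℕ) (R : Finset (Fin (2^(r+1) - 1)))
    (hconn : ∀ x y : Fin (2^(r+1) - 1), x ∈ R → y ∈ R →
      ∃ (m : ℕ) (z : ℕ → Fin (2^(r+1) - 1)),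
      z 0 = x ∧ z m = y ∧ (∀ j, j ≤ m → z j ∈ R) ∧
      (∀ j, j < m → (completeBinaryTree r).Adj (z j) (z (j+1))) ∧
      (∀ j j', j ≤ m → j' ≤ m → z j = z j' → j = j'))
    (hA : 2*p*(p-1)+1 ≤ cnt σ (R ×ˢ Finset.univ) i)
    (hB : 2*p*(p-1)+1 ≤ (R ×ˢ (Finset.univ : Finset VH)).card - cnt σ (R ×ˢ Finset.univ) i) :
    ∃ P : Finset ((Fin (2^(r+1) - 1) × VH) × (Fin (2^(r+1) - 1) × VH)),
      Good (completeBinaryTree r □ H) (Aset σ i) P ∧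
      (∀ e ∈ P, e.1.1 ∈ R ∧ e.2.1 ∈ R) ∧ p ≤ P.card := by
  classical
  set M := R.filter (fun t => 0 < (SA σ t i).card ∧ (SA σ t i).card < 2*p) with hM
  have hSAle : ∀ t : Fin (2^(r+1)-1), (SA σ t i).card ≤ 2*p := by
    intro t; rw [← hcard]; exact Finset.card_le_univ _
  by_cases hk : p ≤ M.card
  case pos =>
    have hedge : ∀ t ∈ M, ∃ uv : VH × VH,
        uv.1 ∈ SA σ t i ∧ uv.2 ∉ SA σ t i ∧ H.Adj uv.1 uv.2 := by
      intro t ht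
      rw [hM, Finset.mem_filter] at ht
      obtain ⟨u, hu⟩ := Finset.card_pos.1 ht.2.1
      obtain ⟨w, hw⟩ : ∃ w, w ∉ SA σ t i := by
        by_contra hcon
        push_neg at hcon
        have he : SA σ t i = Finset.univ := Finset.eq_univ_of_forall hcon
        rw [he, Finset.card_univ, hcard] at ht
        omega
      obtain ⟨a, b, ha, hb, hab⟩ := exists_boundary_edge hH.preconnected
        (show u ∈ (↑(SA σ t i) : Set VH) from hu) (show w ∉ (↑(SA σ t i) : Set VH) from hw)
      exact ⟨(a, b), ha, hb, hab⟩
    choose f hf1 hf2 hf3 using hedge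
    refine ⟨M.attach.image
      (fun t => ((t.1, (f t.1 t.2).1), (t.1, (f t.1 t.2).2))), ⟨?_, ?_, ?_⟩, ?_, ?_⟩
    · intro e he
      rw [Finset.mem_image] at he
      obtain ⟨t, ht, rfl⟩ := he
      refine ⟨(SA_mem σ).1 (hf1 t.1 t.2), fun hc => (hf2 t.1 t.2) ((SA_mem σ).2 hc), ?_⟩
      rw [SimpleGraph.boxProd_adj]
      exact Or.inr ⟨hf3 t.1 t.2, rfl⟩
    · intro e he e' he' heq
      rw [Finset.mem_coe, Finset.mem_image] at he he'
      obtain ⟨t, ht, rfl⟩ := he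
      obtain ⟨t', ht', rfl⟩ := he'
      have h1 : t.1 = t'.1 := congrArg Prod.fst heq
      have h2 : t = t' := Subtype.ext h1
      subst h2
      rfl
    · intro e he e' he' heq
      rw [Finset.mem_coe, Finset.mem_image] at he he'
      obtain ⟨t, ht, rfl⟩ := he
      obtain ⟨t', ht', rfl⟩ := he'
      have h1 : t.1 = t'.1 := congrArg Prod.fst heq
      have h2 : t = t' := Subtype.ext h1
      subst h2
      rfl
    · intro e he
      rw [Finset.mem_image] at he
      obtain ⟨t, ht, rfl⟩ := he
      have hmemR : t.1 ∈ R := Finset.filter_subset _ _ t.2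
      exact ⟨hmemR, hmemR⟩
    · rw [Finset.card_image_of_injective _ ?_, Finset.card_attach]
      · exact hk
      · intro a b hab
        exact Subtype.ext (congrArg (fun e => e.1.1) hab)
  case neg =>
    push_neg at hk
    have hsum := cnt_prod σ R i
    obtain ⟨x, hxR, hxfull⟩ : ∃ x ∈ R, (SA σ x i).card = 2*p := by
      by_contra hcon
      push_neg at hcon
      have hb : ∀ t ∈ R, (SA σ t i).card ≤
          ite (0 < (SA σ t i).card ∧ (SA σ t i).card < 2*p) (2*p-1) 0 := by
        intro t ht
        by_cases hmix : 0 < (SA σ t i).card ∧ (SA σ t i).card < 2*p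
        · rw [if_pos hmix]; omega
        · rw [if_neg hmix]
          push_neg at hmix
          have h1 := hSAle t
          have h2 := hcon t ht
          omega
      have h1 : cnt σ (R ×ˢ Finset.univ) i ≤ M.card * (2*p-1) := by
        rw [hsum]
        calc ∑ t ∈ R, (SA σ t i).card
            ≤ ∑ t ∈ R, ite (0 < (SA σ t i).card ∧ (SA σ t i).card < 2*p) (2*p-1) 0 :=
              Finset.sum_le_sum hb
          _ = ∑ _t ∈ M, (2*p-1) := (Finset.sum_filter _ _).symm
          _ = M.card * (2*p-1) := by rw [Finset.sum_const, smul_eq_mul]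
      have h2 : M.card * (2*p-1) ≤ (p-1) * (2*p-1) := Nat.mul_le_mul_right _ (by omega)
      have h3 : (p-1) * (2*p-1) ≤ (p-1) * (2*p) := Nat.mul_le_mul_left _ (by omega)
      have h4 : (p-1) * (2*p) = 2*p*(p-1) := by ring
      omega
    obtain ⟨y, hyR, hyempty⟩ : ∃ y ∈ R, (SA σ y i).card = 0 := by
      by_contra hcon
      push_neg at hcon
      have hb : ∀ t ∈ R, 2*p - (SA σ t i).card ≤
          ite (0 < (SA σ t i).card ∧ (SA σ t i).card < 2*p) (2*p-1) 0 := by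
        intro t ht
        by_cases hmix : 0 < (SA σ t i).card ∧ (SA σ t i).card < 2*p
        · rw [if_pos hmix]; omega
        · rw [if_neg hmix]
          push_neg at hmix
          have h1 := hSAle t
          have h2 := hcon t ht
          omega
      have h5 : ∀ t ∈ R, (SA σ t i).card + (2*p - (SA σ t i).card) = 2*p := by
        intro t _
        have := hSAle t
        omega
      have h4 : ∑ t ∈ R, (SA σ t i).card + ∑ t ∈ R, (2*p - (SA σ t i).card)
          = R.card * (2*p) := by
        rw [← Finset.sum_add_distrib, Finset.sum_congr rfl h5, Finset.sum_const, smul_eq_mul]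
      have h6 : (R ×ˢ (Finset.univ : Finset VH)).card = R.card * (2*p) := by
        rw [verts_card, hcard]
      have h1 : ∑ t ∈ R, (2*p - (SA σ t i).card) ≤ M.card * (2*p-1) := by
        calc ∑ t ∈ R, (2*p - (SA σ t i).card)
            ≤ ∑ t ∈ R, ite (0 < (SA σ t i).card ∧ (SA σ t i).card < 2*p) (2*p-1) 0 :=
              Finset.sum_le_sum hb
          _ = ∑ _t ∈ M, (2*p-1) := (Finset.sum_filter _ _).symm
          _ = M.card * (2*p-1) := by rw [Finset.sum_const, smul_eq_mul]
      have h2 : M.card * (2*p-1) ≤ (p-1) * (2*p-1) := Nat.mul_le_mul_right _ (by omega)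
      have h3 : (p-1) * (2*p-1) ≤ (p-1) * (2*p) := Nat.mul_le_mul_left _ (by omega)
      have h4' : (p-1) * (2*p) = 2*p*(p-1) := by ring
      omega
    have hxy : x ≠ y := by
      intro hxyeq
      rw [hxyeq, hyempty] at hxfull
      omega
    obtain ⟨m, z, hz0, hzm, hzR, hzadj, hzinj⟩ := hconn x y hxR hyR
    set d : ℕ → ℕ := fun j => (SA σ (z j) i).card with hd
    have hd0 : d 0 = 2*p := by rw [hd]; simp only; rw [hz0, hxfull]
    have hdm : d m = 0 := by rw [hd]; simp only; rw [hzm, hyempty]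
    have htel := tsub_telescope d m
    rw [hd0, hdm] at htel
    have hsplit := Finset.sum_filter_add_sum_filter_not (Finset.range m) (fun j => j % 2 = 0)
      (fun j => d j - d (j+1))
    obtain ⟨E, hEsub, hEsep, hEsum⟩ : ∃ E : Finset ℕ, E ⊆ Finset.range m ∧
        (∀ j ∈ E, ∀ j' ∈ E, j ≠ j' → j + 2 ≤ j' ∨ j' + 2 ≤ j) ∧
        p ≤ ∑ j ∈ E, (d j - d (j+1)) := by
      rcases le_or_gt p (∑ j ∈ (Finset.range m).filter (fun j => j % 2 = 0),
          (d j - d (j+1))) with h | h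
      · refine ⟨_, Finset.filter_subset _ _, ?_, h⟩
        intro j hj j' hj' hne
        simp only [Finset.mem_filter] at hj hj'
        omega
      · refine ⟨(Finset.range m).filter (fun j => ¬ j % 2 = 0),
          Finset.filter_subset _ _, ?_, ?_⟩
        · intro j hj j' hj' hne
          simp only [Finset.mem_filter] at hj hj'
          omega
        · omega
    set P := E.biUnion (fun j => ((SA σ (z j) i) \ (SA σ (z (j+1)) i)).image
        (fun v => (((z j), v), ((z (j+1)), v)))) with hP
    have hmem : ∀ e ∈ P, ∃ j ∈ E, ∃ v, v ∈ SA σ (z j) i ∧ v ∉ SA σ (z (j+1)) i ∧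
        e = (((z j), v), ((z (j+1)), v)) := by
      intro e he
      rw [hP, Finset.mem_biUnion] at he
      obtain ⟨j, hj, he2⟩ := he
      rw [Finset.mem_image] at he2
      obtain ⟨v, hv, rfl⟩ := he2
      rw [Finset.mem_sdiff] at hv
      exact ⟨j, hj, v, hv.1, hv.2, rfl⟩
    refine ⟨P, ⟨?_, ?_, ?_⟩, ?_, ?_⟩
    · intro e he
      obtain ⟨j, hj, v, hv1, hv2, rfl⟩ := hmem e he
      have hjm := Finset.mem_range.1 (hEsub hj)
      refine ⟨(SA_mem σ).1 hv1, fun hc => hv2 ((SA_mem σ).2 hc), ?_⟩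
      rw [SimpleGraph.boxProd_adj]
      exact Or.inl ⟨hzadj j hjm, rfl⟩
    · intro e he e' he' heq
      obtain ⟨j, hj, v, hv1, hv2, rfl⟩ := hmem e (Finset.mem_coe.1 he)
      obtain ⟨j', hj', v', hv1', hv2', rfl⟩ := hmem e' (Finset.mem_coe.1 he')
      have hjm := Finset.mem_range.1 (hEsub hj)
      have hjm' := Finset.mem_range.1 (hEsub hj')
      have h1 : z j = z j' := congrArg Prod.fst heq
      have h2 : v = v' := congrArg Prod.snd heq
      have h3 : j = j' := hzinj j j' (by omega) (by omega) h1
      subst h3; subst h2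
      rfl
    · intro e he e' he' heq
      obtain ⟨j, hj, v, hv1, hv2, rfl⟩ := hmem e (Finset.mem_coe.1 he)
      obtain ⟨j', hj', v', hv1', hv2', rfl⟩ := hmem e' (Finset.mem_coe.1 he')
      have hjm := Finset.mem_range.1 (hEsub hj)
      have hjm' := Finset.mem_range.1 (hEsub hj')
      have h1 : z (j+1) = z (j'+1) := congrArg Prod.fst heq
      have h2 : v = v' := congrArg Prod.snd heq
      have h3 : j + 1 = j' + 1 := hzinj (j+1) (j'+1) (by omega) (by omega) h1
      have h4 : j = j' := by omega
      subst h4; subst h2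
      rfl
    · intro e he
      obtain ⟨j, hj, v, hv1, hv2, rfl⟩ := hmem e he
      have hjm := Finset.mem_range.1 (hEsub hj)
      exact ⟨hzR j (by omega), hzR (j+1) (by omega)⟩
    · have hdisj : ∀ j1 ∈ E, ∀ j2 ∈ E, j1 ≠ j2 →
          Disjoint (((SA σ (z j1) i) \ (SA σ (z (j1+1)) i)).image
            (fun v => (((z j1), v), ((z (j1+1)), v))))
            (((SA σ (z j2) i) \ (SA σ (z (j2+1)) i)).image
            (fun v => (((z j2), v), ((z (j2+1)), v)))) := by
        intro j1 hj1 j2 hj2 hne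
        rw [Finset.disjoint_left]
        intro e he1 he2
        rw [Finset.mem_image] at he1 he2
        obtain ⟨v1, hv1, rfl⟩ := he1
        obtain ⟨v2, hv2, he⟩ := he2
        have h1 : z j2 = z j1 := congrArg (fun w => w.1.1) he
        have hjm1 := Finset.mem_range.1 (hEsub hj1)
        have hjm2 := Finset.mem_range.1 (hEsub hj2)
        exact hne (hzinj j1 j2 (by omega) (by omega) h1.symm)
      rw [hP, Finset.card_biUnion hdisj]
      calc p ≤ ∑ j ∈ E, (d j - d (j+1)) := hEsum
        _ ≤ ∑ j ∈ E, (((SA σ (z j) i) \ (SA σ (z (j+1)) i)).image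
            (fun v => (((z j), v), ((z (j+1)), v)))).card := by
          refine Finset.sum_le_sum fun j hj => ?_
          rw [Finset.card_image_of_injective _ (fun a b hab => by
            simpa using congrArg (fun w => w.1.2) hab)]
          exact Finset.le_card_sdiff _ _

end Chunk

end MWLB

namespace MWLB

open Finset SimpleGraph

section Tree2

variable {VH : Type} [Fintype VH] {H : SimpleGraph VH} {r : ℕ}

lemma size_pos : 1 ≤ 2^(r+1) - 1 := by
  have : (2:ℕ) ≤ 2^(r+1) := by
    calc (2:ℕ) = 2^1 := by norm_num
    _ ≤ 2^(r+1) := Nat.pow_le_pow_right (by norm_num) (by omega)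
  omega

lemma D_card_lb {c h t : ℕ} (hch : c ≤ h) (hnode : 2^h * (t+2) ≤ 2^(r+1)) :
    2^(c+1) - 1 ≤ (D r t).card := by
  classical
  set U : Finset ℕ := (Finset.range (c+1)).biUnion
    (fun k => Finset.Icc (2^k*(t+1)-1) (2^k*(t+1)+2^k-2)) with hU
  have hdisj : ∀ k1 ∈ Finset.range (c+1), ∀ k2 ∈ Finset.range (c+1), k1 ≠ k2 →
      Disjoint (Finset.Icc (2^k1*(t+1)-1) (2^k1*(t+1)+2^k1-2))
        (Finset.Icc (2^k2*(t+1)-1) (2^k2*(t+1)+2^k2-2)) := by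
    have key : ∀ k1 k2 : ℕ, k1 < k2 →
        Disjoint (Finset.Icc (2^k1*(t+1)-1) (2^k1*(t+1)+2^k1-2))
          (Finset.Icc (2^k2*(t+1)-1) (2^k2*(t+1)+2^k2-2)) := by
      intro k1 k2 hk
      rw [Finset.disjoint_left]
      intro j hj1 hj2
      rw [Finset.mem_Icc] at hj1 hj2
      have h1 : 1 ≤ 2^k1 := Nat.one_le_two_pow
      have h2 : 2^(k1+1) ≤ 2^k2 := Nat.pow_le_pow_right (by norm_num) (by omega)
      have h3 : 2^(k1+1) * (t+1) ≤ 2^k2 * (t+1) := Nat.mul_le_mul_right _ h2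
      have h4 : (2:ℕ)^(k1+1) * (t+1) = 2 * (2^k1 * (t+1)) := by ring
      have h5 : 2^k1 ≤ 2^k1 * (t+1) := by
        have := Nat.mul_le_mul_left (2^k1) (show 1 ≤ t+1 by omega)
        simpa using this
      omega
    intro k1 _ k2 _ hne
    rcases Nat.lt_or_ge k1 k2 with h | h
    · exact key k1 k2 h
    · exact (key k2 k1 (by omega)).symm
  have hUcard : U.card = 2^(c+1) - 1 := by
    rw [hU, Finset.card_biUnion hdisj]
    have he : ∀ k, (Finset.Icc (2^k*(t+1)-1) (2^k*(t+1)+2^k-2)).card = 2^k := by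
      intro k
      rw [Nat.card_Icc]
      have h1 : 1 ≤ 2^k := Nat.one_le_two_pow
      have h5 : 2^k ≤ 2^k * (t+1) := by
        have := Nat.mul_le_mul_left (2^k) (show 1 ≤ t+1 by omega)
        simpa using this
      omega
    rw [Finset.sum_congr rfl (fun k _ => he k)]
    exact geom_two (c+1)
  rw [← hUcard]
  have hbound : ∀ j ∈ U, j < 2^(r+1) - 1 := by
    intro j hj
    rw [hU, Finset.mem_biUnion] at hj
    obtain ⟨k, hk, hj⟩ := hj
    rw [Finset.mem_Icc] at hj
    rw [Finset.mem_range] at hk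
    have h2 : 2^k * (t+2) ≤ 2^h * (t+2) :=
      Nat.mul_le_mul_right _ (Nat.pow_le_pow_right (by norm_num) (by omega))
    have h1 : 1 ≤ 2^k := Nat.one_le_two_pow
    have h4 : (2:ℕ)^k * (t+2) = 2^k * (t+1) + 2^k := by ring
    omega
  refine Finset.card_le_card_of_injOn
    (fun j => if hj : j < 2^(r+1) - 1 then (⟨j, hj⟩ : Fin (2^(r+1)-1)) else ⟨0, by
      have := @size_pos r; omega⟩) ?_ ?_
  · intro j hj
    simp only [dif_pos (hbound j hj)]
    rw [Finset.mem_coe, mem_D]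
    rw [hU, Finset.mem_coe, Finset.mem_biUnion] at hj
    obtain ⟨k, hk, hj2⟩ := hj
    rw [Finset.mem_Icc] at hj2
    exact ⟨k, desc_range k t j hj2.1 hj2.2⟩
  · intro j hj j' hj' he
    simp only [dif_pos (hbound j hj), dif_pos (hbound j' hj')] at he
    exact congrArg Fin.val he

lemma D_empty {u : ℕ} (hu : 2^(r+1) - 1 ≤ u) : D r u = (∅ : Finset (Fin (2^(r+1)-1))) := by
  ext j
  simp only [Finset.notMem_empty, iff_false, mem_D]
  rintro ⟨k, hk⟩
  have h1 := pa_iter_le k j.val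
  have h2 := j.isLt
  omega

lemma tree_adj {a b : Fin (2^(r+1)-1)} (hne : a.val ≠ b.val)
    (h : b.val = 2*a.val+1 ∨ b.val = 2*a.val+2 ∨ a.val = 2*b.val+1 ∨ a.val = 2*b.val+2) :
    (completeBinaryTree r).Adj a b := by
  have hne2 : a ≠ b := fun h' => hne (congrArg Fin.val h')
  rw [completeBinaryTree, SimpleGraph.fromRel_adj]
  exact ⟨hne2, by tauto⟩

lemma region_conn (t u : ℕ) (x y : Fin (2^(r+1)-1))
    (hx : x ∈ D r t \ D r u) (hy : y ∈ D r t \ D r u) :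
    ∃ (m : ℕ) (z : ℕ → Fin (2^(r+1)-1)), z 0 = x ∧ z m = y ∧
      (∀ j, j ≤ m → z j ∈ D r t \ D r u) ∧
      (∀ j, j < m → (completeBinaryTree r).Adj (z j) (z (j+1))) ∧
      (∀ j j', j ≤ m → j' ≤ m → z j = z j' → j = j') := by
  rw [Finset.mem_sdiff, mem_D, mem_D] at hx hy
  obtain ⟨m, z0, hz0, hzm, hmem, hadj, hinj⟩ := path_exists hx.1 hy.1 hx.2 hy.2
  have hsize : ∀ j, j ≤ m → z0 j < 2^(r+1)-1 := by
    intro j hj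
    have h1 := (hmem j hj).1
    have h2 := x.isLt
    have h3 := y.isLt
    rcases max_cases x.val y.val with ⟨he, -⟩ | ⟨he, -⟩ <;> omega
  refine ⟨m, fun j => if hj : j ≤ m then (⟨z0 j, hsize j hj⟩ : Fin _) else x, ?_, ?_, ?_, ?_, ?_⟩
  · simp only [dif_pos (Nat.zero_le m)]
    exact Fin.ext hz0
  · simp only [dif_pos (le_refl m)]
    exact Fin.ext hzm
  · intro j hj
    simp only [dif_pos hj]
    rw [Finset.mem_sdiff, mem_D, mem_D]
    exact ⟨(hmem j hj).2.1, (hmem j hj).2.2⟩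
  · intro j hj
    simp only [dif_pos (show j ≤ m by omega), dif_pos (show j + 1 ≤ m by omega)]
    refine tree_adj ?_ ?_
    · intro he
      have := hinj j (j+1) (by omega) (by omega) he
      omega
    · have := hadj j hj
      tauto
  · intro j j' hj hj' he
    simp only [dif_pos hj, dif_pos hj'] at he
    exact hinj j j' hj hj' (congrArg Fin.val he)

lemma good_union [DecidableEq VH] {GG : SimpleGraph (Fin (2^(r+1)-1) × VH)} {A : Set (Fin (2^(r+1)-1) × VH)}
    {P Q : Finset ((Fin (2^(r+1)-1) × VH) × (Fin (2^(r+1)-1) × VH))}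
    {R1 R2 : Finset (Fin (2^(r+1)-1))}
    (hP : Good GG A P) (hQ : Good GG A Q)
    (hPin : ∀ e ∈ P, e.1.1 ∈ R1 ∧ e.2.1 ∈ R1) (hQin : ∀ e ∈ Q, e.1.1 ∈ R2 ∧ e.2.1 ∈ R2)
    (hd : ∀ a, a ∈ R1 → a ∈ R2 → False) :
    Good GG A (P ∪ Q) ∧
    (∀ e ∈ P ∪ Q, (e.1.1 ∈ R1 ∨ e.1.1 ∈ R2) ∧ (e.2.1 ∈ R1 ∨ e.2.1 ∈ R2)) ∧
    (P ∪ Q).card = P.card + Q.card := by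
  classical
  have hdisj : Disjoint P Q := by
    rw [Finset.disjoint_left]
    intro e heP heQ
    exact hd e.1.1 (hPin e heP).1 (hQin e heQ).1
  refine ⟨⟨?_, ?_, ?_⟩, ?_, Finset.card_union_of_disjoint hdisj⟩
  · intro e he
    rcases Finset.mem_union.1 he with h | h
    · exact hP.1 e h
    · exact hQ.1 e h
  · intro e he e' he' heq
    rcases Finset.mem_union.1 (Finset.mem_coe.1 he) with h | h <;>
      rcases Finset.mem_union.1 (Finset.mem_coe.1 he') with h' | h'
    · exact hP.2.1 (Finset.mem_coe.2 h) (Finset.mem_coe.2 h') heq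
    · exact (hd e.1.1 (hPin e h).1
        (by rw [show e.1.1 = e'.1.1 from congrArg Prod.fst heq]; exact (hQin e' h').1)).elim
    · exact (hd e'.1.1 (hPin e' h').1
        (by rw [show e'.1.1 = e.1.1 from (congrArg Prod.fst heq).symm]; exact (hQin e h).1)).elim
    · exact hQ.2.1 (Finset.mem_coe.2 h) (Finset.mem_coe.2 h') heq
  · intro e he e' he' heq
    rcases Finset.mem_union.1 (Finset.mem_coe.1 he) with h | h <;>
      rcases Finset.mem_union.1 (Finset.mem_coe.1 he') with h' | h'
    · exact hP.2.2 (Finset.mem_coe.2 h) (Finset.mem_coe.2 h') heq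
    · exact (hd e.2.1 (hPin e h).2
        (by rw [show e.2.1 = e'.2.1 from congrArg Prod.fst heq]; exact (hQin e' h').2)).elim
    · exact (hd e'.2.1 (hPin e' h').2
        (by rw [show e'.2.1 = e.2.1 from (congrArg Prod.fst heq).symm]; exact (hQin e h).2)).elim
    · exact hQ.2.2 (Finset.mem_coe.2 h) (Finset.mem_coe.2 h') heq
  · intro e he
    rcases Finset.mem_union.1 he with h | h
    · exact ⟨Or.inl (hPin e h).1, Or.inl (hPin e h).2⟩
    · exact ⟨Or.inr (hQin e h).1, Or.inr (hQin e h).2⟩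

end Tree2

end MWLB

namespace MWLB

open Finset SimpleGraph

section Rec

variable {VH : Type} [Fintype VH] {H : SimpleGraph VH} {r : ℕ}
variable (σ : Fin (Fintype.card (Fin (2^(r+1) - 1) × VH)) ≃ (Fin (2^(r+1) - 1) × VH))

lemma q_bound {p : ℕ} (hp : 1 ≤ p) : 2*(2*p*(p-1)+1) ≤ (2*p-1)*(2*p) := by
  obtain ⟨p', rfl⟩ : ∃ p', p = p'+1 := ⟨p-1, by omega⟩
  have h1 : p'+1-1 = p' := by omega
  have h2 : 2*(p'+1)-1 = 2*p'+1 := by omega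
  rw [h1, h2]
  nlinarith [sq_nonneg p']

lemma verts_lb {p c h t : ℕ} (hcard : Fintype.card VH = 2*p) (hp : 1 ≤ p)
    (hpc : p ≤ 2^c) (hch : c ≤ h) (hnode : 2^h*(t+2) ≤ 2^(r+1)) :
    2*(2*p*(p-1)+1) ≤ ((D r t) ×ˢ (Finset.univ : Finset VH)).card := by
  have h1 := D_card_lb (r := r) hch hnode
  rw [verts_card, hcard]
  have h2 : 2*p - 1 ≤ 2^(c+1) - 1 := by
    have h5 : (2:ℕ)^(c+1) = 2*2^c := by ring
    omega
  have h3 : (2*p-1) * (2*p) ≤ (D r t).card * (2*p) := Nat.mul_le_mul_right _ (by omega)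
  have h4 := q_bound hp
  omega

lemma busy_sub {q : ℕ} {R1 R2 : Finset (Fin (2^(r+1)-1))} (hsub : R1 ⊆ R2) {i : ℕ}
    (h1 : q ≤ cnt σ (R1 ×ˢ Finset.univ) i)
    (h2 : q ≤ (R1 ×ˢ (Finset.univ : Finset VH)).card - cnt σ (R1 ×ˢ Finset.univ) i) :
    q ≤ cnt σ (R2 ×ˢ Finset.univ) i ∧
    q ≤ (R2 ×ˢ (Finset.univ : Finset VH)).card - cnt σ (R2 ×ˢ Finset.univ) i := by
  have hsub2 : R1 ×ˢ (Finset.univ : Finset VH) ⊆ R2 ×ˢ Finset.univ :=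
    Finset.product_subset_product_left hsub
  have h3 := cnt_subset σ hsub2 i
  have h4 := cnt_subset_diff σ hsub2 i
  have h5 := Finset.card_le_card hsub2
  constructor <;> omega

lemma combine (hH : H.Connected) {p : ℕ} (hp : 1 ≤ p) (hcard : Fintype.card VH = 2*p)
    {t ga gb gc : ℕ}
    (hga : isAnc t ga) (hgb : isAnc t gb) (hgc : isAnc t gc)
    (hdab : ∀ j : ℕ, isAnc ga j → isAnc gb j → False)
    (hdcb : ∀ j : ℕ, isAnc gc j → isAnc gb j → False)
    {ia ib ic : ℕ} (hab : ia ≤ ib) (hbc : ib ≤ ic)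
    (hiaA : 2*p*(p-1)+1 ≤ cnt σ ((D r ga) ×ˢ Finset.univ) ia)
    (hicB : 2*p*(p-1)+1 ≤ ((D r gc) ×ˢ (Finset.univ : Finset VH)).card -
      cnt σ ((D r gc) ×ˢ Finset.univ) ic)
    {Pb : Finset ((Fin (2^(r+1) - 1) × VH) × (Fin (2^(r+1) - 1) × VH))}
    (hPbGood : Good (completeBinaryTree r □ H) (Aset σ ib) Pb)
    (hPbIn : ∀ e ∈ Pb, e.1.1 ∈ D r gb ∧ e.2.1 ∈ D r gb) :
    ∃ P, Good (completeBinaryTree r □ H) (Aset σ ib) P ∧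
      (∀ e ∈ P, e.1.1 ∈ D r t ∧ e.2.1 ∈ D r t) ∧ Pb.card + p ≤ P.card := by
  classical
  have hgaR : D r ga ⊆ D r t \ D r gb := by
    intro j hj
    rw [Finset.mem_sdiff]
    refine ⟨D_subset hga hj, fun hc => ?_⟩
    rw [mem_D] at hj hc
    exact hdab j.val hj hc
  have hgcR : D r gc ⊆ D r t \ D r gb := by
    intro j hj
    rw [Finset.mem_sdiff]
    refine ⟨D_subset hgc hj, fun hc => ?_⟩
    rw [mem_D] at hj hc
    exact hdcb j.val hj hc
  have hA : 2*p*(p-1)+1 ≤ cnt σ ((D r t \ D r gb) ×ˢ Finset.univ) ib := by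
    have h1 := cnt_mono σ ((D r ga) ×ˢ (Finset.univ : Finset VH)) hab
    have h2 := cnt_subset σ
      (Finset.product_subset_product_left (t := (Finset.univ : Finset VH)) hgaR) ib
    omega
  have hB : 2*p*(p-1)+1 ≤ ((D r t \ D r gb) ×ˢ (Finset.univ : Finset VH)).card -
      cnt σ ((D r t \ D r gb) ×ˢ Finset.univ) ib := by
    have h1 := cnt_mono σ ((D r gc) ×ˢ (Finset.univ : Finset VH)) hbc
    have hsub := Finset.product_subset_product_left (t := (Finset.univ : Finset VH)) hgcR
    have h2 := cnt_subset_diff σ hsub ib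
    have h3 := Finset.card_le_card hsub
    omega
  obtain ⟨Pout, hPoutGood, hPoutIn, hPoutCard⟩ := chunk σ hH hp hcard ib (D r t \ D r gb)
    (fun x y hx hy => region_conn t gb x y hx hy) hA hB
  obtain ⟨hGood, hIn, hCard⟩ := good_union hPbGood hPoutGood hPbIn hPoutIn
    (fun a h1 h2 => (Finset.mem_sdiff.1 h2).2 h1)
  refine ⟨Pb ∪ Pout, hGood, ?_, by omega⟩
  intro e he
  obtain ⟨h1, h2⟩ := hIn e he
  constructor
  · rcases h1 with hh | hh
    · exact D_subset hgb hh
    · exact (Finset.mem_sdiff.1 hh).1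
  · rcases h2 with hh | hh
    · exact D_subset hgb hh
    · exact (Finset.mem_sdiff.1 hh).1

lemma main_rec (hH : H.Connected) {p c : ℕ} (hp : 1 ≤ p) (hcard : Fintype.card VH = 2*p)
    (hpc : p ≤ 2^c) :
    ∀ h t : ℕ, c ≤ h → 2^h * (t+2) ≤ 2^(r+1) →
    ∃ i, i ≤ Fintype.card (Fin (2^(r+1) - 1) × VH) ∧
      2*p*(p-1)+1 ≤ cnt σ ((D r t) ×ˢ Finset.univ) i ∧
      2*p*(p-1)+1 ≤ ((D r t) ×ˢ (Finset.univ : Finset VH)).card -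
        cnt σ ((D r t) ×ˢ Finset.univ) i ∧
      ∃ P, Good (completeBinaryTree r □ H) (Aset σ i) P ∧
        (∀ e ∈ P, e.1.1 ∈ D r t ∧ e.2.1 ∈ D r t) ∧ p * (1 + (h - c)/2) ≤ P.card := by
  intro h
  induction h using Nat.strong_induction_on with
  | _ h IH =>
  intro t hch hnode
  by_cases hbase : h < c + 2
  case pos =>
    have hverts := verts_lb (r := r) hcard hp hpc hch hnode
    obtain ⟨i, hiN, hicnt⟩ := cnt_hit σ (show 1 ≤ 2*p*(p-1)+1 by omega)
      (show 2*p*(p-1)+1 ≤ ((D r t) ×ˢ (Finset.univ : Finset VH)).card by omega)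
    refine ⟨i, hiN, by omega, by omega, ?_⟩
    have hconn : ∀ x y : Fin (2^(r+1)-1), x ∈ D r t → y ∈ D r t →
        ∃ (m : ℕ) (z : ℕ → Fin (2^(r+1) - 1)),
        z 0 = x ∧ z m = y ∧ (∀ j, j ≤ m → z j ∈ D r t) ∧
        (∀ j, j < m → (completeBinaryTree r).Adj (z j) (z (j+1))) ∧
        (∀ j j', j ≤ m → j' ≤ m → z j = z j' → j = j') := by
      intro x y hx hy
      have hDe : D r (2^(r+1)) = (∅ : Finset (Fin (2^(r+1)-1))) := D_empty (by omega)
      have hx' : x ∈ D r t \ D r (2^(r+1)) :=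
        Finset.mem_sdiff.2 ⟨hx, by rw [hDe]; exact Finset.notMem_empty x⟩
      have hy' : y ∈ D r t \ D r (2^(r+1)) :=
        Finset.mem_sdiff.2 ⟨hy, by rw [hDe]; exact Finset.notMem_empty y⟩
      obtain ⟨m, z, hz0, hzm, hmem, hadj, hinj⟩ := region_conn t (2^(r+1)) x y hx' hy'
      exact ⟨m, z, hz0, hzm, fun j hj => (Finset.mem_sdiff.1 (hmem j hj)).1, hadj, hinj⟩
    obtain ⟨P, hPG, hPin, hPc⟩ := chunk σ hH hp hcard i (D r t) hconn (by omega) (by omega)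
    refine ⟨P, hPG, hPin, ?_⟩
    have he0 : (h - c)/2 = 0 := by omega
    rw [he0]
    simpa using hPc
  case neg =>
    have hnodeg : ∀ g, 4*t+3 ≤ g → g ≤ 4*t+5 → 2^(h-2) * (g+2) ≤ 2^(r+1) := by
      intro g h1 h2
      have e1 : 2^(h-2) * 4 = 2^h := by
        rw [show (4:ℕ) = 2^2 by norm_num, ← pow_add]
        congr 1
        omega
      calc 2^(h-2) * (g+2) ≤ 2^(h-2) * (4*(t+2)) := Nat.mul_le_mul_left _ (by omega)
        _ = (2^(h-2) * 4) * (t+2) := by ring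
        _ = 2^h * (t+2) := by rw [e1]
        _ ≤ 2^(r+1) := hnode
    obtain ⟨i1, hi1N, hi1A, hi1B, P1, hP1G, hP1in, hP1c⟩ :=
      IH (h-2) (by omega) (4*t+3) (by omega) (hnodeg _ (by omega) (by omega))
    obtain ⟨i2, hi2N, hi2A, hi2B, P2, hP2G, hP2in, hP2c⟩ :=
      IH (h-2) (by omega) (4*t+4) (by omega) (hnodeg _ (by omega) (by omega))
    obtain ⟨i3, hi3N, hi3A, hi3B, P3, hP3G, hP3in, hP3c⟩ :=
      IH (h-2) (by omega) (4*t+5) (by omega) (hnodeg _ (by omega) (by omega))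
    have harith : p * (1 + (h - 2 - c)/2) + p = p * (1 + (h-c)/2) := by
      have he : 1 + (h - 2 - c)/2 + 1 = 1 + (h-c)/2 := by omega
      calc p * (1 + (h - 2 - c)/2) + p = p * (1 + (h - 2 - c)/2 + 1) := by ring
        _ = p * (1 + (h-c)/2) := by rw [he]
    have step : ∀ ga gb gc ia ib ic : ℕ,
        ∀ Pb : Finset ((Fin (2^(r+1) - 1) × VH) × (Fin (2^(r+1) - 1) × VH)),
        (4*t+3 ≤ ga) → (ga ≤ 4*t+5) → (4*t+3 ≤ gb) → (gb ≤ 4*t+5) →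
        (4*t+3 ≤ gc) → (gc ≤ 4*t+5) → ga ≠ gb → gc ≠ gb → ia ≤ ib → ib ≤ ic →
        ib ≤ Fintype.card (Fin (2^(r+1) - 1) × VH) →
        (2*p*(p-1)+1 ≤ cnt σ ((D r ga) ×ˢ Finset.univ) ia) →
        (2*p*(p-1)+1 ≤ cnt σ ((D r gb) ×ˢ Finset.univ) ib) →
        (2*p*(p-1)+1 ≤ ((D r gb) ×ˢ (Finset.univ : Finset VH)).card -
          cnt σ ((D r gb) ×ˢ Finset.univ) ib) →
        (2*p*(p-1)+1 ≤ ((D r gc) ×ˢ (Finset.univ : Finset VH)).card -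
          cnt σ ((D r gc) ×ˢ Finset.univ) ic) →
        Good (completeBinaryTree r □ H) (Aset σ ib) Pb →
        (∀ e ∈ Pb, e.1.1 ∈ D r gb ∧ e.2.1 ∈ D r gb) →
        p * (1 + (h - 2 - c)/2) ≤ Pb.card →
        ∃ i, i ≤ Fintype.card (Fin (2^(r+1) - 1) × VH) ∧
          2*p*(p-1)+1 ≤ cnt σ ((D r t) ×ˢ Finset.univ) i ∧
          2*p*(p-1)+1 ≤ ((D r t) ×ˢ (Finset.univ : Finset VH)).card -
            cnt σ ((D r t) ×ˢ Finset.univ) i ∧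
          ∃ P, Good (completeBinaryTree r □ H) (Aset σ i) P ∧
            (∀ e ∈ P, e.1.1 ∈ D r t ∧ e.2.1 ∈ D r t) ∧ p * (1 + (h - c)/2) ≤ P.card := by
      intro ga gb gc ia ib ic Pb ha1 ha2 hb1 hb2 hc1 hc2 hneab hnecb hab hbc hibN
        hiaA hibA hibB hicB hPbG hPbIn hPbC
      obtain ⟨hAt, hBt⟩ := busy_sub σ (D_subset (grandchild_anc hb1 hb2)) hibA hibB
      obtain ⟨P, hPG, hPIn, hPC⟩ := combine σ hH hp hcard
        (grandchild_anc ha1 ha2) (grandchild_anc hb1 hb2) (grandchild_anc hc1 hc2)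
        (fun j hj1 hj2 => grandchild_disj ha1 ha2 hb1 hb2 hneab hj1 hj2)
        (fun j hj1 hj2 => grandchild_disj hc1 hc2 hb1 hb2 hnecb hj1 hj2)
        hab hbc hiaA hicB hPbG hPbIn
      exact ⟨ib, hibN, hAt, hBt, P, hPG, hPIn, by omega⟩
    rcases le_total i1 i2 with h12 | h12
    · rcases le_total i2 i3 with h23 | h23
      · exact step (4*t+3) (4*t+4) (4*t+5) i1 i2 i3 P2 (by omega) (by omega) (by omega)
          (by omega) (by omega) (by omega) (by omega) (by omega) h12 h23 hi2N
          hi1A hi2A hi2B hi3B hP2G hP2in hP2c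
      · rcases le_total i1 i3 with h13 | h13
        · exact step (4*t+3) (4*t+5) (4*t+4) i1 i3 i2 P3 (by omega) (by omega) (by omega)
            (by omega) (by omega) (by omega) (by omega) (by omega) h13 h23 hi3N
            hi1A hi3A hi3B hi2B hP3G hP3in hP3c
        · exact step (4*t+5) (4*t+3) (4*t+4) i3 i1 i2 P1 (by omega) (by omega) (by omega)
            (by omega) (by omega) (by omega) (by omega) (by omega) h13 h12 hi1N
            hi3A hi1A hi1B hi2B hP1G hP1in hP1c
    · rcases le_total i2 i3 with h23 | h23
      · rcases le_total i1 i3 with h13 | h13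
        · exact step (4*t+4) (4*t+3) (4*t+5) i2 i1 i3 P1 (by omega) (by omega) (by omega)
            (by omega) (by omega) (by omega) (by omega) (by omega) h12 h13 hi1N
            hi2A hi1A hi1B hi3B hP1G hP1in hP1c
        · exact step (4*t+4) (4*t+5) (4*t+3) i2 i3 i1 P3 (by omega) (by omega) (by omega)
            (by omega) (by omega) (by omega) (by omega) (by omega) h23 h13 hi3N
            hi2A hi3A hi3B hi1B hP3G hP3in hP3c
      · exact step (4*t+5) (4*t+4) (4*t+3) i3 i2 i1 P2 (by omega) (by omega) (by omega)
          (by omega) (by omega) (by omega) (by omega) (by omega) h23 h12 hi2N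
          hi3A hi2A hi2B hi1B hP2G hP2in hP2c

end Rec

end MWLB

/-- Let `p ≥ 1` and let `H` be a connected graph with exactly `2p` vertices. Then for any
`r ≥ ⌈log₂ p⌉`, the matching width of `T_r □ H` is at least `(r + 1 - ⌈log₂ p⌉)·p/2`,
where `T_r` is the complete binary tree of height `r`. -/
theorem matchingWidth_binaryTree_lb {VH : Type} [Fintype VH] (H : SimpleGraph VH)
    (hH : H.Connected) (p : ℕ) (hp : 1 ≤ p) (hcard : Fintype.card VH = 2 * p)
    (r : ℕ) (hr : Nat.clog 2 p ≤ r) :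
    ((r + 1 - Nat.clog 2 p : ℕ) : ℝ) * (p : ℝ) / 2 ≤
      (matchingWidth (completeBinaryTree r □ H) : ℝ) := by
  classical
  set c := Nat.clog 2 p with hc
  have hpc : p ≤ 2^c := Nat.le_pow_clog (by norm_num) p
  have hmw : p * (1 + (r - c)/2) ≤ matchingWidth (completeBinaryTree r □ H) := by
    apply MWLB.le_matchingWidth
    intro σ
    obtain ⟨i, hiN, hA, hB, P, hPG, hPIn, hPC⟩ :=
      MWLB.main_rec σ hH hp hcard hpc r 0 hr (by rw [pow_succ])
    refine ⟨⟨i, by omega⟩, ?_⟩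
    have h1 := MWLB.Good.hasCutMatching hPG
    have h2 := MWLB.hasCutMatching_mono hPC h1
    exact h2
  have harith : (r + 1 - c) * p ≤ 2 * (p * (1 + (r-c)/2)) := by
    have h1 : r + 1 - c = (r - c) + 1 := by omega
    have h2 : (r - c) + 1 ≤ 2 * (1 + (r-c)/2) := by omega
    calc (r+1-c)*p = ((r-c)+1) * p := by rw [h1]
      _ ≤ (2 * (1 + (r-c)/2)) * p := Nat.mul_le_mul_right _ h2
      _ = 2 * (p * (1 + (r-c)/2)) := by ring
  have hfin : (r + 1 - c) * p ≤ 2 * matchingWidth (completeBinaryTree r □ H) := by omega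
  rw [div_le_iff₀ (by norm_num : (0:ℝ) < 2)]
  calc ((r + 1 - c : ℕ) : ℝ) * (p:ℝ) = (((r + 1 - c) * p : ℕ) : ℝ) := by push_cast; ring
    _ ≤ ((2 * matchingWidth (completeBinaryTree r □ H) : ℕ) : ℝ) := Nat.cast_le.2 hfin
    _ = (matchingWidth (completeBinaryTree r □ H) : ℝ) * 2 := by push_cast; ring
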